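/- Stronger Central Sets Theorem (commutative case, via combinatorial characterization): let (S,+) be a countable commutative semigroup and let C be a central subset of S. Then there exist α : P_f(S^ℕ) → S and H : P_f(S^ℕ) → P_f(ℕ) such that: (1) if F ⊊ G in P_f(S^ℕ) then max H(F) < min H(G); (2) whenever r ∈ ℕ, G_1 ⊊ G_2 ⊊ ⋯ ⊊ G_r in P_f(S^ℕ) and f_i ∈ G_i for each i ∈ {1,…,r}, one has ∑_{i=1}^r (α(G_i) + ∑_{t ∈ H(G_i)} f_i(t)) ∈ C. -/

import Mathlib

/-- Fold of addition along a list, starting from `a` (no identity needed). -/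
def addChain {S : Type*} [Add S] : S → List S → S
  | a, [] => a
  | a, b :: l => addChain (a + b) l

/-- The sum `∑ t ∈ H, f t` in an additive commutative semigroup (junk value `f 0`
for `H = ∅`; we only use it for nonempty `H`). -/
def finSum {S : Type*} [AddCommSemigroup S] (f : ℕ → S) (H : Finset ℕ) : S :=
  match H.sort (· ≤ ·) with
  | [] => f 0
  | a :: l => addChain (f a) (l.map f)

def AddThick {S : Type*} [AddCommSemigroup S] (A : Set S) : Prop :=
  ∀ E : Finset S, E.Nonempty → ∃ x : S, ∀ e ∈ E, e + x ∈ A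

def AddPiecewiseSyndetic {S : Type*} [AddCommSemigroup S] (A : Set S) : Prop :=
  ∃ F : Finset S, F.Nonempty ∧ AddThick {s : S | ∃ t ∈ F, t + s ∈ A}

/-- Combinatorial characterization of central sets: a decreasing chain of piecewise
syndetic subsets with the shift property. -/
def AddCentral {S : Type*} [AddCommSemigroup S] (A : Set S) : Prop :=
  ∃ C : ℕ → Set S, (∀ n, C n ⊆ A) ∧ (∀ n, C (n + 1) ⊆ C n) ∧
    (∀ n, AddPiecewiseSyndetic (C n)) ∧
    (∀ n, ∀ x ∈ C n, ∃ m, C m ⊆ {s : S | x + s ∈ C n})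

namespace SCST
variable {S : Type*} [AddCommSemigroup S]

abbrev M (S : Type*) := WithZero S

lemma coe_injM : Function.Injective ((↑·) : S → M S) := fun a b h => by
  simpa using h

lemma coe_addM (a b : S) : ((↑(a + b) : M S)) = ↑a + ↑b := rfl

lemma addChain_add_left (l : List S) : ∀ a b : S, addChain (a + b) l = a + addChain b l := by
  induction l with
  | nil => intro a b; rfl
  | cons c l ih =>
    intro a b
    show addChain (a + b + c) l = a + addChain (b + c) l
    rw [add_assoc, ih]

lemma coe_addChain (l : List S) (a : S) :
    ((addChain a l : S) : M S) = ↑a + (l.map ((↑·) : S → M S)).sum := by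
  induction l generalizing a with
  | nil => simp [addChain]
  | cons b l ih =>
    show ((addChain (a + b) l : S) : M S) = _
    rw [ih, coe_addM]
    simp [add_assoc]

lemma coe_finSum (f : ℕ → S) (H : Finset ℕ) (hH : H.Nonempty) :
    ((finSum f H : S) : M S) = ∑ t ∈ H, (↑(f t) : M S) := by
  obtain ⟨a, l, hl⟩ : ∃ a l, H.sort (· ≤ ·) = a :: l := by
    cases h : H.sort (· ≤ ·) with
    | nil =>
      exfalso
      have := Finset.length_sort (α := ℕ) (· ≤ ·) (s := H)
      rw [h] at this
      simp [Finset.card_eq_zero.1 this.symm] at hH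
    | cons a l => exact ⟨a, l, rfl⟩
  have h1 : finSum f H = addChain (f a) (l.map f) := by
    show (match H.sort (· ≤ ·) with
      | [] => f 0
      | a :: l => addChain (f a) (l.map f)) = _
    rw [hl]
  have h2 : ∑ t ∈ H, (↑(f t) : M S) = ((H.sort (· ≤ ·)).map (fun t => (↑(f t) : M S))).sum := by
    rw [Finset.sum_eq_multiset_sum, ← Finset.sort_eq H (· ≤ ·), Multiset.map_coe,
      Multiset.sum_coe]
  rw [h1, h2, hl, coe_addChain]
  simp [List.map_map, Function.comp_def]

lemma exists_coe_eq (s : S) (m : M S) : ∃ s' : S, (↑s' : M S) = ↑s + m := by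
  induction m with
  | none => exact ⟨s, (add_zero _).symm⟩
  | some t => exact ⟨s + t, rfl⟩

open Combinatorics in
theorem keyLemma (A : Set S) (hA : AddPiecewiseSyndetic A) (F : Finset (ℕ → S))
    (hF : F.Nonempty) (n : ℕ) :
    ∃ (a : S) (H : Finset ℕ), H.Nonempty ∧ (∀ t ∈ H, n < t) ∧
      ∀ f ∈ F, a + finSum f H ∈ A := by
  classical
  obtain ⟨F₀, hF₀, hthick⟩ := hA
  set B : Set S := {s : S | ∃ t ∈ F₀, t + s ∈ A} with hB
  obtain ⟨f₀, hf₀⟩ := hF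
  haveI : Nonempty {f // f ∈ F} := ⟨⟨f₀, hf₀⟩⟩
  obtain ⟨ι, ιfin, hHJ⟩ := Line.exists_mono_in_high_dimension {f // f ∈ F} {u // u ∈ F₀}
  haveI := ιfin
  let e := Fintype.equivFin ι
  let τ : ι → ℕ := fun i => n + 2 + (e i : ℕ)
  have hτinj : Function.Injective τ := by
    intro i j h
    simp only [τ] at h
    have : (e i : ℕ) = (e j : ℕ) := by omega
    exact e.injective (Fin.ext this)
  have hτn : ∀ i, n < τ i := fun i => by simp only [τ]; omega
  let g : (ι → {f // f ∈ F}) → S := fun w =>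
    addChain (f₀ (n + 1))
      (List.ofFn fun j : Fin (Fintype.card ι) => (w (e.symm j)).val (τ (e.symm j)))
  have hg : ∀ w, ((g w : S) : M S) = ↑(f₀ (n + 1)) + ∑ i : ι, (↑((w i).val (τ i)) : M S) := by
    intro w
    rw [coe_addChain]
    congr 1
    rw [List.map_ofFn, List.sum_ofFn]
    exact (Equiv.sum_comp e.symm fun i => (↑((w i).val (τ i)) : M S))
  -- thickness gives x
  have hEne : (Finset.univ.image g).Nonempty := ⟨g (fun _ => ⟨f₀, hf₀⟩), Finset.mem_image_of_mem _ (Finset.mem_univ _)⟩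
  obtain ⟨x, hx⟩ := hthick (Finset.univ.image g) hEne
  have hgx : ∀ w, ∃ u ∈ F₀, u + (g w + x) ∈ A := fun w =>
    hx (g w) (Finset.mem_image_of_mem _ (Finset.mem_univ _))
  choose uf huf hufA using hgx
  let χ : (ι → {f // f ∈ F}) → {u // u ∈ F₀} := fun w => ⟨uf w, huf w⟩
  obtain ⟨l, c, hc⟩ := hHJ χ
  -- moving coordinates
  let I : Finset ι := Finset.univ.filter (fun i => l.idxFun i = none)
  have hIne : I.Nonempty := by
    obtain ⟨i, hi⟩ := l.proper
    exact ⟨i, by simp [I, hi]⟩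
  -- fixed part
  have hmm : ∃ m : M S, ∀ j : {f // f ∈ F},
      ∑ i : ι, (↑((l j i).val (τ i)) : M S)
        = (∑ t ∈ I.image τ, (↑(j.val t) : M S)) + m := by
    refine ⟨∑ i ∈ Iᶜ, (↑((l ⟨f₀, hf₀⟩ i).val (τ i)) : M S), fun j => ?_⟩
    rw [← Finset.sum_add_sum_compl I]
    congr 1
    · rw [Finset.sum_image (fun a _ b _ h => hτinj h)]
      apply Finset.sum_congr rfl
      intro i hi
      have hnone : l.idxFun i = none := by simpa [I] using hi
      simp [Line.apply_def, hnone]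
    · apply Finset.sum_congr rfl
      intro i hi
      have hsome : l.idxFun i ≠ none := by simpa [I] using hi
      obtain ⟨v, hv⟩ := Option.ne_none_iff_exists'.1 hsome
      simp [Line.apply_def, hv]
  obtain ⟨m, hsplit⟩ := hmm
  obtain ⟨c', hc'⟩ := exists_coe_eq (f₀ (n + 1)) m
  refine ⟨c.val + c' + x, I.image τ, hIne.image τ, ?_, ?_⟩
  · intro t ht
    obtain ⟨i, _, rfl⟩ := Finset.mem_image.1 ht
    exact hτn i
  · intro f hf
    have hcv : uf (l ⟨f, hf⟩) = c.val := congrArg Subtype.val (hc ⟨f, hf⟩)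
    have hmem : c.val + (g (l ⟨f, hf⟩) + x) ∈ A := by rw [← hcv]; exact hufA _
    have e1 : ((g (l ⟨f, hf⟩) : S) : M S)
        = ↑(f₀ (n + 1)) + ∑ i : ι, (↑((l ⟨f, hf⟩ i).val (τ i)) : M S) := hg (l ⟨f, hf⟩)
    have e2 : ∑ i : ι, (↑((l ⟨f, hf⟩ i).val (τ i)) : M S)
        = (∑ t ∈ I.image τ, (↑(f t) : M S)) + m := hsplit ⟨f, hf⟩
    have hEq : c.val + c' + x + finSum f (I.image τ) = c.val + (g (l ⟨f, hf⟩) + x) := by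
      apply coe_injM
      show ((c.val + c' + x + finSum f (I.image τ) : S) : M S)
        = ((c.val + (g (l ⟨f, hf⟩) + x) : S) : M S)
      beta_reduce at e1 e2 ⊢
      simp only [coe_addM]
      rw [e1, e2, hc', coe_finSum _ _ (hIne.image τ)]
      abel
    rw [hEq]
    exact hmem

lemma addChain_concat (l : List S) (a b : S) : addChain a (l.concat b) = addChain a l + b := by
  induction l generalizing a with
  | nil => rfl
  | cons c l ih => exact ih (a + c)

attribute [local instance] Classical.propDecidable

/-- The sum along a chain of finsets. -/
noncomputable def chainSum (P : Finset (ℕ → S) → S × Finset ℕ) {r : ℕ}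
    (Gs : Fin (r + 1) → Finset (ℕ → S)) (fs : Fin (r + 1) → ℕ → S) : S :=
  addChain ((P (Gs 0)).1 + finSum (fs 0) ((P (Gs 0)).2))
    (List.ofFn fun i : Fin r => (P (Gs i.succ)).1 + finSum (fs i.succ) ((P (Gs i.succ)).2))

def chainSums (P : Finset (ℕ → S) → S × Finset ℕ) (G : Finset (ℕ → S)) : Set S :=
  {y | ∃ (r : ℕ) (Gs : Fin (r + 1) → Finset (ℕ → S)) (fs : Fin (r + 1) → ℕ → S),
    (∀ i, (Gs i).Nonempty) ∧ (∀ i j, i < j → Gs i ⊂ Gs j) ∧ (∀ i, fs i ∈ Gs i) ∧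
    (∀ i, Gs i ⊂ G) ∧ y = chainSum P Gs fs}

noncomputable def nbound (P : Finset (ℕ → S) → S × Finset ℕ) (G : Finset (ℕ → S)) : ℕ :=
  G.ssubsets.sup fun F => (P F).2.sup id

lemma chainSum_congr {P Q : Finset (ℕ → S) → S × Finset ℕ} {r : ℕ}
    {Gs : Fin (r + 1) → Finset (ℕ → S)} {fs : Fin (r + 1) → ℕ → S}
    (h : ∀ i, P (Gs i) = Q (Gs i)) : chainSum P Gs fs = chainSum Q Gs fs := by
  unfold chainSum
  simp only [h]

lemma chainSums_congr {P Q : Finset (ℕ → S) → S × Finset ℕ} {G : Finset (ℕ → S)}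
    (h : ∀ F, F ⊂ G → P F = Q F) : chainSums P G = chainSums Q G := by
  have key : ∀ (P Q : Finset (ℕ → S) → S × Finset ℕ), (∀ F, F ⊂ G → P F = Q F) →
      chainSums P G ⊆ chainSums Q G := by
    rintro P Q h y ⟨r, Gs, fs, h1, h2, h3, h4, rfl⟩
    exact ⟨r, Gs, fs, h1, h2, h3, h4, chainSum_congr fun i => h _ (h4 i)⟩
  exact le_antisymm (key P Q h) (key Q P fun F hF => (h F hF).symm)

lemma card_lt_of_chain {r : ℕ} {Gs : Fin (r + 1) → Finset (ℕ → S)}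
    (h1 : ∀ i, (Gs i).Nonempty) (h2 : ∀ i j, i < j → Gs i ⊂ Gs j) :
    ∀ i : Fin (r + 1), (i : ℕ) < (Gs i).card := by
  intro i
  induction i using Fin.induction with
  | zero => exact Finset.card_pos.2 (h1 0)
  | succ i ih =>
    have hlt := Finset.card_lt_card (h2 i.castSucc i.succ (Fin.castSucc_lt_succ (i := i)))
    have h3 : (i : ℕ) < (Gs i.castSucc).card := by simpa using ih
    have h4 : ((i.succ : Fin (r + 1)) : ℕ) = (i : ℕ) + 1 := Fin.val_succ i
    omega

lemma chainSums_finite (P : Finset (ℕ → S) → S × Finset ℕ) (G : Finset (ℕ → S)) :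
    (chainSums P G).Finite := by
  classical
  have hsub : chainSums P G ⊆ ⋃ r ∈ Finset.range (G.card + 1),
      Set.range (fun p : (Fin (r + 1) → {F // F ∈ G.powerset}) × (Fin (r + 1) → {f // f ∈ G}) =>
        chainSum P (fun i => (p.1 i).val) (fun i => (p.2 i).val)) := by
    rintro y ⟨r, Gs, fs, h1, h2, h3, h4, rfl⟩
    have hi : (r : ℕ) < (Gs (Fin.last r)).card := by
      simpa using card_lt_of_chain h1 h2 (Fin.last r)
    have hcard := Finset.card_lt_card (h4 (Fin.last r))
    have hr : r ∈ Finset.range (G.card + 1) := Finset.mem_range.2 (by omega)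
    apply Set.mem_biUnion hr
    exact ⟨(fun i => ⟨Gs i, Finset.mem_powerset.2 (h4 i).subset⟩,
      fun i => ⟨fs i, (h4 i).subset (h3 i)⟩), rfl⟩
  refine Set.Finite.subset ?_ hsub
  apply Set.Finite.biUnion (Finset.finite_toSet _)
  intro r _
  exact Set.finite_range _

variable (Ch : ℕ → Set S)

def StepSpec (P : Finset (ℕ → S) → S × Finset ℕ) (G : Finset (ℕ → S)) (p : S × Finset ℕ) : Prop :=
  p.2.Nonempty ∧ (∀ t ∈ p.2, nbound P G < t) ∧
  ∃ M : ℕ, Ch M ⊆ Ch 0 ∧ (∀ y ∈ chainSums P G, y ∈ Ch 0 → ∀ s ∈ Ch M, y + s ∈ Ch 0) ∧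
    ∀ f ∈ G, p.1 + finSum f p.2 ∈ Ch M

lemma exists_step (hdec : ∀ m n : ℕ, m ≤ n → Ch n ⊆ Ch m)
    (hps : ∀ n, AddPiecewiseSyndetic (Ch n))
    (hshift : ∀ x ∈ Ch 0, ∃ m, Ch m ⊆ {s : S | x + s ∈ Ch 0})
    (P : Finset (ℕ → S) → S × Finset ℕ) (G : Finset (ℕ → S)) (hG : G.Nonempty) :
    ∃ p, StepSpec Ch P G p := by
  classical
  set mfun : S → ℕ := fun y => if hy : y ∈ Ch 0 then (hshift y hy).choose else 0 with hmfun
  set M := (chainSums_finite P G).toFinset.sup mfun with hM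
  have hlev : ∀ y ∈ chainSums P G, y ∈ Ch 0 → ∀ s ∈ Ch M, y + s ∈ Ch 0 := by
    intro y hy hy0 s hs
    have h1 : mfun y ≤ M := Finset.le_sup ((chainSums_finite P G).mem_toFinset.2 hy)
    have h2 : Ch M ⊆ Ch (mfun y) := hdec _ _ h1
    have h3 : mfun y = (hshift y hy0).choose := by simp only [hmfun, dif_pos hy0]
    have h4 : s ∈ Ch (hshift y hy0).choose := h3 ▸ h2 hs
    exact (hshift y hy0).choose_spec h4
  obtain ⟨a, H, h1, h2, h3⟩ := keyLemma (Ch M) (hps M) G hG (nbound P G)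
  exact ⟨(a, H), h1, h2, M, hdec 0 M (Nat.zero_le M), hlev, h3⟩

noncomputable def buildFun (s₀ : S)
    (hstep : ∀ (P : Finset (ℕ → S) → S × Finset ℕ) (G : Finset (ℕ → S)), G.Nonempty →
      ∃ p, StepSpec Ch P G p) : ℕ → Finset (ℕ → S) → S × Finset ℕ
  | 0, _ => (s₀, ∅)
  | n + 1, G =>
    if h : G.card ≤ n then buildFun s₀ hstep n G
    else Classical.choose (hstep (buildFun s₀ hstep n) G (Finset.card_pos.1 (by omega)))

variable {s₀ : S}
  {hstep : ∀ (P : Finset (ℕ → S) → S × Finset ℕ) (G : Finset (ℕ → S)), G.Nonempty →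
      ∃ p, StepSpec Ch P G p}

lemma build_stable : ∀ (n : ℕ) (G : Finset (ℕ → S)), G.card ≤ n →
    buildFun Ch s₀ hstep n G = buildFun Ch s₀ hstep G.card G := by
  intro n
  induction n with
  | zero =>
    intro G h
    have h0 : G.card = 0 := Nat.le_zero.1 h
    rw [h0]
  | succ n ih =>
    intro G h
    rcases le_or_gt G.card n with h' | h'
    · rw [show buildFun Ch s₀ hstep (n + 1) G = buildFun Ch s₀ hstep n G from by
        simp only [buildFun]; rw [dif_pos h']]
      exact ih G h'
    · have : G.card = n + 1 := le_antisymm h h'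
      rw [this]

lemma main_spec (G : Finset (ℕ → S)) (hG : G.Nonempty) :
    StepSpec Ch (fun F => buildFun Ch s₀ hstep F.card F) G (buildFun Ch s₀ hstep G.card G) := by
  obtain ⟨n, hn⟩ : ∃ n, G.card = n + 1 := ⟨G.card - 1, by
    have := Finset.card_pos.2 hG; omega⟩
  have hnot : ¬ G.card ≤ n := by omega
  have hspec : StepSpec Ch (buildFun Ch s₀ hstep n) G (buildFun Ch s₀ hstep G.card G) := by
    rw [hn]
    simp only [buildFun]
    rw [dif_neg hnot]
    exact Classical.choose_spec _
  have hagree : ∀ F, F ⊂ G → buildFun Ch s₀ hstep n F = buildFun Ch s₀ hstep F.card F := by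
    intro F hF
    have : F.card ≤ n := by
      have := Finset.card_lt_card hF
      omega
    exact build_stable Ch n F this
  obtain ⟨s1, s2, M, m1, m2, m3⟩ := hspec
  refine ⟨s1, ?_, M, m1, ?_, m3⟩
  · have hb : nbound (fun F => buildFun Ch s₀ hstep F.card F) G
        = nbound (buildFun Ch s₀ hstep n) G := by
      unfold nbound
      exact Finset.sup_congr rfl fun F hF => by
        rw [hagree F (Finset.mem_ssubsets.1 hF)]
    rw [hb]
    exact s2
  · rw [chainSums_congr fun F hF => (hagree F hF).symm]
    exact m2

end SCST


theorem strongerCentralSetsTheorem {S : Type*} [AddCommSemigroup S] [Countable S]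
    (C : Set S) (hC : AddCentral C) :
    ∃ (α : Finset (ℕ → S) → S) (H : Finset (ℕ → S) → Finset ℕ),
      (∀ F : Finset (ℕ → S), F.Nonempty → (H F).Nonempty) ∧
      (∀ F G : Finset (ℕ → S), F.Nonempty → F ⊂ G → ∀ s ∈ H F, ∀ t ∈ H G, s < t) ∧
      (∀ r : ℕ, ∀ G : Fin (r + 1) → Finset (ℕ → S), ∀ f : Fin (r + 1) → ℕ → S,
        (G 0).Nonempty → (∀ i j : Fin (r + 1), i < j → G i ⊂ G j) →
        (∀ i, f i ∈ G i) →
        addChain (α (G 0) + finSum (f 0) (H (G 0)))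
          (List.ofFn fun i : Fin r =>
            α (G i.succ) + finSum (f i.succ) (H (G i.succ))) ∈ C) := by
  classical
  obtain ⟨Ch, hsub, hdec1, hps, hshift⟩ := hC
  obtain ⟨F₀, hF₀ne, -⟩ := hps 0
  obtain ⟨s₀, -⟩ := hF₀ne
  have hdec : ∀ m n : ℕ, m ≤ n → Ch n ⊆ Ch m := fun m n h =>
    antitone_nat_of_succ_le (f := Ch) (fun k => hdec1 k) h
  have hstep := SCST.exists_step Ch hdec hps (hshift 0)
  set Φ : Finset (ℕ → S) → S × Finset ℕ := fun G => SCST.buildFun Ch s₀ hstep G.card G with hΦ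
  have hms : ∀ G : Finset (ℕ → S), G.Nonempty → SCST.StepSpec Ch Φ G (Φ G) :=
    fun G hG => SCST.main_spec Ch (s₀ := s₀) (hstep := hstep) G hG
  refine ⟨fun G => (Φ G).1, fun G => (Φ G).2, ?_, ?_, ?_⟩
  · exact fun F hF => (hms F hF).1
  · intro F G hF hFG s hs t ht
    have hG : G.Nonempty := hF.mono hFG.subset
    have h2 := (hms G hG).2.1 t ht
    refine lt_of_le_of_lt ?_ h2
    have hle1 : s ≤ (Φ F).2.sup id := Finset.le_sup (f := id) hs
    have hle2 : (Φ F).2.sup id ≤ SCST.nbound Φ G :=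
      Finset.le_sup (f := fun F => (Φ F).2.sup id) (Finset.mem_ssubsets.2 hFG)
    exact le_trans hle1 hle2
  · intro r G f hG0 hmono hf
    have h1 : ∀ i, (G i).Nonempty := by
      intro i
      rcases eq_or_ne i 0 with rfl | h
      · exact hG0
      · exact hG0.mono (hmono 0 i (Fin.pos_of_ne_zero h)).subset
    have main : ∀ (r : ℕ) (G : Fin (r + 1) → Finset (ℕ → S)) (f : Fin (r + 1) → ℕ → S),
        (∀ i, (G i).Nonempty) → (∀ i j, i < j → G i ⊂ G j) → (∀ i, f i ∈ G i) →
        SCST.chainSum Φ G f ∈ Ch 0 := by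
      intro r
      induction r with
      | zero =>
        intro G f h1 h2 h3
        obtain ⟨-, -, M, hM0, -, hmem⟩ := hms (G 0) (h1 0)
        have he : SCST.chainSum Φ G f = (Φ (G 0)).1 + finSum (f 0) ((Φ (G 0)).2) := by
          simp [SCST.chainSum, addChain]
        rw [he]
        exact hM0 (hmem (f 0) (h3 0))
      | succ r ih =>
        intro G f h1 h2 h3
        have hy : SCST.chainSum Φ (fun i => G i.castSucc) (fun i => f i.castSucc) ∈ Ch 0 :=
          ih _ _ (fun i => h1 _)
            (fun i j hij => h2 _ _ (Fin.castSucc_lt_castSucc_iff.2 hij)) (fun i => h3 _)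
        have hyc : SCST.chainSum Φ (fun i => G i.castSucc) (fun i => f i.castSucc)
            ∈ SCST.chainSums Φ (G (Fin.last (r + 1))) :=
          ⟨r, _, _, fun i => h1 _,
            fun i j hij => h2 _ _ (Fin.castSucc_lt_castSucc_iff.2 hij), fun i => h3 _,
            fun i => h2 _ _ (Fin.castSucc_lt_last i), rfl⟩
        obtain ⟨-, -, M, hM0, hsh, hmem⟩ := hms (G (Fin.last (r + 1))) (h1 _)
        have hz := hmem (f (Fin.last (r + 1))) (h3 _)
        have hdecomp : SCST.chainSum Φ G f
            = SCST.chainSum Φ (fun i => G i.castSucc) (fun i => f i.castSucc)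
              + ((Φ (G (Fin.last (r + 1)))).1
                  + finSum (f (Fin.last (r + 1))) ((Φ (G (Fin.last (r + 1)))).2)) := by
          unfold SCST.chainSum
          rw [List.ofFn_succ', List.concat_eq_append, ← List.concat_eq_append,
            SCST.addChain_concat]
          simp only [Fin.castSucc_zero, Fin.succ_castSucc, Fin.succ_last]
        rw [hdecomp]
        exact hsh _ hyc hy _ hz
    exact hsub 0 (main r G f h1 hmono hf)
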